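/- Let C ⊆ F_q^n be an MDS code with parameters (n, M, d)_q, i.e., |C| = M = q^{n−d+1} and minimum distance d, where d ≤ n. Then for any distinct codewords u, v ∈ C there exists a codeword u' ∈ C such that d(u, u') = d and d(u', v) ≤ d(u, v) − 1. -/
import Mathlib

open Finset

/-- The minimum distance of a code `C ⊆ F^n`. -/
noncomputable def minDist {F : Type*} [Fintype F] [DecidableEq F] {n : ℕ}
    (C : Set (Fin n → F)) : ℕ :=
  sInf {d : ℕ | ∃ x ∈ C, ∃ y ∈ C, x ≠ y ∧ hammingDist x y = d}

/-- In an `(n, M, d)_q` MDS code (`M = q^{n−d+1}`, minimum distance `d ≤ n`),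
for any distinct codewords `u, v` there is a codeword `u'` with `d(u, u') = d` and
`d(u', v) ≤ d(u, v) − 1`. -/
theorem MDS_step_lemma
    {F : Type*} [Field F] [Fintype F] [DecidableEq F]
    {n d : ℕ} (hd : 1 ≤ d) (hdn : d ≤ n)
    (C : Set (Fin n → F)) (hmin : minDist C = d)
    (hMDS : Nat.card C = Fintype.card F ^ (n - d + 1))
    (u v : Fin n → F) (hu : u ∈ C) (hv : v ∈ C) (huv : u ≠ v) :
    ∃ u' ∈ C, hammingDist u u' = d ∧ hammingDist u' v ≤ hammingDist u v - 1 := by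
  classical
  -- min distance lower bound
  have hlow : ∀ x ∈ C, ∀ y ∈ C, x ≠ y → d ≤ hammingDist x y := by
    intro x hx y hy hxy
    rw [← hmin]
    exact Nat.sInf_le ⟨x, hx, y, hy, hxy, rfl⟩
  set w := hammingDist u v with hw
  have hdw : d ≤ w := hlow u hu v hv huv
  set D : Finset (Fin n) := {i | u i ≠ v i} with hD
  have hDcard : #D = w := rfl
  have hDne : D.Nonempty := by
    rw [← card_pos, hDcard]
    omega
  obtain ⟨j, hj⟩ := hDne
  have hjD : u j ≠ v j := by simpa [hD] using hj
  -- build I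
  have hsub : insert j Dᶜ ⊆ Finset.univ := subset_univ _
  have hcards : #(insert j Dᶜ) ≤ n - d + 1 := by
    have h1 : #(insert j Dᶜ) ≤ #Dᶜ + 1 := card_insert_le _ _
    have h2 : #Dᶜ = n - w := by
      rw [card_compl, hDcard]; simp
    omega
  obtain ⟨I, hsI, _, hIcard⟩ := Finset.exists_subsuperset_card_eq hsub hcards
    (by simpa using by omega)
  have hjI : j ∈ I := hsI (mem_insert_self _ _)
  have hDcI : Dᶜ ⊆ I := fun i hi => hsI (mem_insert_of_mem hi)
  have hIcomplD : (Iᶜ : Finset (Fin n)) ⊆ D := by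
    intro i hi
    by_contra h
    exact (mem_compl.mp hi) (hDcI (mem_compl.mpr h))
  have hIccard : #(Iᶜ : Finset (Fin n)) = d - 1 := by
    rw [card_compl, hIcard]; simp; omega
  -- codewords agreeing on I are equal
  have hinj : ∀ x ∈ C, ∀ y ∈ C, (∀ i ∈ I, x i = y i) → x = y := by
    intro x hx y hy hagree
    by_contra hxy
    have h1 : ({i | x i ≠ y i} : Finset (Fin n)) ⊆ Iᶜ := by
      intro i hi
      rw [mem_compl]
      intro hiI
      exact (mem_filter.mp hi).2 (hagree i hiI)
    have := card_le_card h1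
    rw [hIccard] at this
    have := hlow x hx y hy hxy
    unfold hammingDist at this
    omega
  -- projection is surjective
  haveI : Finite C := Set.toFinite C
  haveI : Fintype C := Fintype.ofFinite C
  let f : C → ((i : I) → F) := fun x i => (x : Fin n → F) i
  have hfinj : Function.Injective f := by
    intro x y hxy
    apply Subtype.ext
    apply hinj x x.2 y y.2
    intro i hiI
    exact congrFun hxy ⟨i, hiI⟩
  have hcardeq : Fintype.card C = Fintype.card ((i : I) → F) := by
    rw [← Nat.card_eq_fintype_card, hMDS, Fintype.card_pi]
    simp [hIcard]
  have hfsurj : Function.Surjective f :=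
    ((Fintype.bijective_iff_injective_and_card f).mpr ⟨hfinj, hcardeq⟩).2
  -- target vector
  obtain ⟨u'c, hu'c⟩ := hfsurj (fun i => if (i : Fin n) = j then v j else u i)
  obtain ⟨u', hu'⟩ := u'c
  have hval : ∀ i ∈ I, u' i = if i = j then v j else u i := by
    intro i hiI
    exact congrFun hu'c ⟨i, hiI⟩
  have hu'j : u' j = v j := by simpa using hval j hjI
  have hu'I : ∀ i ∈ I, i ≠ j → u' i = u i := by
    intro i hiI hij
    simpa [hij] using hval i hiI
  have hu'ne : u' ≠ u := fun h => hjD (by rw [← h, hu'j])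
  -- hammingDist u u' = d
  have hdist1 : hammingDist u u' = d := by
    have hle : hammingDist u u' ≤ d := by
      have hss : ({i | u i ≠ u' i} : Finset (Fin n)) ⊆ insert j Iᶜ := by
        intro i hi
        rcases eq_or_ne i j with rfl | hij
        · exact mem_insert_self _ _
        · refine mem_insert_of_mem (mem_compl.mpr ?_)
          intro hiI
          exact (mem_filter.mp hi).2 (hu'I i hiI hij).symm
      calc hammingDist u u' ≤ #(insert j Iᶜ) := card_le_card hss
        _ ≤ #(Iᶜ : Finset (Fin n)) + 1 := card_insert_le _ _
        _ = d := by omega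
    exact le_antisymm hle (hlow u hu u' hu' (Ne.symm hu'ne))
  refine ⟨u', hu', hdist1, ?_⟩
  -- hammingDist u' v ≤ w - 1
  have hss : ({i | u' i ≠ v i} : Finset (Fin n)) ⊆ D.erase j := by
    intro i hi
    have hi' : u' i ≠ v i := (mem_filter.mp hi).2
    have hij : i ≠ j := by
      rintro rfl
      exact hi' hu'j
    refine mem_erase.mpr ⟨hij, ?_⟩
    by_cases hiI : i ∈ I
    · rw [hD, mem_filter]
      exact ⟨mem_univ _, by rw [← hu'I i hiI hij]; exact hi'⟩
    · exact hIcomplD (mem_compl.mpr hiI)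
  calc hammingDist u' v ≤ #(D.erase j) := card_le_card hss
    _ = w - 1 := by rw [card_erase_of_mem hj, hDcard]
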